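/- Let S₁ be Hausdorff with Radon probability measure μ₁ on its Borel sets, (S₂, Σ₂, μ₂) a probability space, 𝔅₁, 𝔅₂ sub-algebras of the respective σ-algebras, and μ a finitely additive measure on 𝔅₁ ⊗ 𝔅₂ whose marginals are μ₁ and μ₂. Then any decreasing sequence (B_i) of sets in 𝔅₁ ⊗ 𝔅₂ with empty intersection satisfies lim_i μ(B_i) = 0. -/

import Mathlib

open MeasureTheory

/-- An algebra (Boolean algebra) of subsets of `S`. -/
def IsSetAlg {S : Type*} (𝔄 : Set (Set S)) : Prop :=
  ∅ ∈ 𝔄 ∧ (∀ A ∈ 𝔄, Aᶜ ∈ 𝔄) ∧ (∀ A ∈ 𝔄, ∀ B ∈ 𝔄, A ∪ B ∈ 𝔄)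

/-- The algebra `𝔅₁ ⊗ 𝔅₂` of finite unions of rectangles `B₁ × B₂`, `B_j ∈ 𝔅_j`. -/
def RectAlg {S₁ S₂ : Type*} (𝔅₁ : Set (Set S₁)) (𝔅₂ : Set (Set S₂)) :
    Set (Set (S₁ × S₂)) :=
  { B | ∃ (n : ℕ) (R₁ : Fin n → Set S₁) (R₂ : Fin n → Set S₂),
      (∀ i, R₁ i ∈ 𝔅₁ ∧ R₂ i ∈ 𝔅₂) ∧ B = ⋃ i, R₁ i ×ˢ R₂ i }

section Aux

variable {S : Type*}

/-- A family containing `∅` and closed under binary unions is closed under `Fin`-indexed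
unions. -/
lemma unionClosed_iUnion_fin {𝒞 : Set (Set S)} (h0 : ∅ ∈ 𝒞)
    (hU : ∀ A ∈ 𝒞, ∀ B ∈ 𝒞, A ∪ B ∈ 𝒞) :
    ∀ {n : ℕ} (s : Fin n → Set S), (∀ i, s i ∈ 𝒞) → (⋃ i, s i) ∈ 𝒞 := by
  intro n
  induction n with
  | zero => intro s hs; rw [Set.iUnion_of_empty]; exact h0
  | succ n ih =>
    intro s hs
    have : (⋃ i, s i) = s 0 ∪ ⋃ i : Fin n, s i.succ := by
      ext x
      simp only [Set.mem_iUnion, Set.mem_union]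
      exact Fin.exists_fin_succ
    rw [this]
    exact hU _ (hs 0) _ (ih _ fun i => hs i.succ)

lemma IsSetAlg.univ_mem {𝔄 : Set (Set S)} (h : IsSetAlg 𝔄) : Set.univ ∈ 𝔄 := by
  have := h.2.1 ∅ h.1
  simpa using this

lemma IsSetAlg.inter_mem {𝔄 : Set (Set S)} (h : IsSetAlg 𝔄) {A B : Set S}
    (hA : A ∈ 𝔄) (hB : B ∈ 𝔄) : A ∩ B ∈ 𝔄 := by
  have := h.2.1 _ (h.2.2 _ (h.2.1 A hA) _ (h.2.1 B hB))
  simpa [Set.compl_union] using this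

lemma IsSetAlg.iUnion_fin {𝔄 : Set (Set S)} (h : IsSetAlg 𝔄) {n : ℕ}
    (s : Fin n → Set S) (hs : ∀ i, s i ∈ 𝔄) : (⋃ i, s i) ∈ 𝔄 :=
  unionClosed_iUnion_fin h.1 h.2.2 s hs

lemma IsSetAlg.iUnion_fintype {𝔄 : Set (Set S)} (h : IsSetAlg 𝔄) {ι : Type*} [Fintype ι]
    (s : ι → Set S) (hs : ∀ i, s i ∈ 𝔄) : (⋃ i, s i) ∈ 𝔄 := by
  classical
  have : (⋃ i, s i) = ⋃ i ∈ Finset.univ, s i := by simp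
  rw [this]
  induction (Finset.univ : Finset ι) using Finset.induction_on with
  | empty => simpa using h.1
  | insert _ _ hni ih =>
    rw [Finset.set_biUnion_insert]
    exact h.2.2 _ (hs _) _ ih

lemma IsSetAlg.iInter_fintype {𝔄 : Set (Set S)} (h : IsSetAlg 𝔄) {ι : Type*} [Fintype ι]
    (s : ι → Set S) (hs : ∀ i, s i ∈ 𝔄) : (⋂ i, s i) ∈ 𝔄 := by
  have : (⋂ i, s i) = (⋃ i, (s i)ᶜ)ᶜ := by simp
  rw [this]
  exact h.2.1 _ (h.iUnion_fintype _ fun i => h.2.1 _ (hs i))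

end Aux

section RectAlgLemmas

variable {S₁ S₂ : Type*} {𝔅₁ : Set (Set S₁)} {𝔅₂ : Set (Set S₂)}

lemma rectAlg_rect {A : Set S₁} {B : Set S₂} (hA : A ∈ 𝔅₁) (hB : B ∈ 𝔅₂) :
    A ×ˢ B ∈ RectAlg 𝔅₁ 𝔅₂ :=
  ⟨1, fun _ => A, fun _ => B, fun _ => ⟨hA, hB⟩, (Set.iUnion_const _).symm⟩

lemma rectAlg_empty : (∅ : Set (S₁ × S₂)) ∈ RectAlg 𝔅₁ 𝔅₂ :=
  ⟨0, Fin.elim0, Fin.elim0, fun i => i.elim0, by rw [Set.iUnion_of_empty]⟩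

lemma rectAlg_union {X Y : Set (S₁ × S₂)} (hX : X ∈ RectAlg 𝔅₁ 𝔅₂)
    (hY : Y ∈ RectAlg 𝔅₁ 𝔅₂) : X ∪ Y ∈ RectAlg 𝔅₁ 𝔅₂ := by
  obtain ⟨n, R1, R2, hR, hXeq⟩ := hX
  obtain ⟨p, T1, T2, hT, hYeq⟩ := hY
  refine ⟨n + p, fun i => Sum.elim R1 T1 (finSumFinEquiv.symm i),
    fun i => Sum.elim R2 T2 (finSumFinEquiv.symm i), ?_, ?_⟩
  · intro i
    rcases h : finSumFinEquiv.symm i with a | b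
    · simp only [h, Sum.elim_inl]; exact hR a
    · simp only [h, Sum.elim_inr]; exact hT b
  · have hsurj : Function.Surjective (finSumFinEquiv.symm : Fin (n + p) → Fin n ⊕ Fin p) :=
      finSumFinEquiv.symm.surjective
    rw [hsurj.iUnion_comp (g := fun j => Sum.elim R1 T1 j ×ˢ Sum.elim R2 T2 j),
      Set.iUnion_sum]
    simp [hXeq, hYeq]

lemma rectAlg_iUnion_fin {n : ℕ} (s : Fin n → Set (S₁ × S₂))
    (hs : ∀ i, s i ∈ RectAlg 𝔅₁ 𝔅₂) : (⋃ i, s i) ∈ RectAlg 𝔅₁ 𝔅₂ :=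
  unionClosed_iUnion_fin rectAlg_empty (fun _ hA _ hB => rectAlg_union hA hB) s hs

lemma rectAlg_inter (halg₁ : IsSetAlg 𝔅₁) (halg₂ : IsSetAlg 𝔅₂)
    {X Y : Set (S₁ × S₂)} (hX : X ∈ RectAlg 𝔅₁ 𝔅₂) (hY : Y ∈ RectAlg 𝔅₁ 𝔅₂) :
    X ∩ Y ∈ RectAlg 𝔅₁ 𝔅₂ := by
  obtain ⟨n, R1, R2, hR, hXeq⟩ := hX
  obtain ⟨p, T1, T2, hT, hYeq⟩ := hY
  have : X ∩ Y = ⋃ i : Fin n, ⋃ j : Fin p, (R1 i ∩ T1 j) ×ˢ (R2 i ∩ T2 j) := by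
    subst hXeq hYeq
    ext z
    simp only [Set.mem_inter_iff, Set.mem_iUnion, Set.mem_prod]
    constructor
    · rintro ⟨⟨i, hi1, hi2⟩, ⟨j, hj1, hj2⟩⟩
      exact ⟨i, j, ⟨hi1, hj1⟩, ⟨hi2, hj2⟩⟩
    · rintro ⟨i, j, ⟨hi1, hj1⟩, ⟨hi2, hj2⟩⟩
      exact ⟨⟨i, hi1, hi2⟩, ⟨j, hj1, hj2⟩⟩
  rw [this]
  exact rectAlg_iUnion_fin _ fun i => rectAlg_iUnion_fin _ fun j =>
    rectAlg_rect (halg₁.inter_mem (hR i).1 (hT j).1) (halg₂.inter_mem (hR i).2 (hT j).2)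

lemma rectAlg_iInter_fin (halg₁ : IsSetAlg 𝔅₁) (halg₂ : IsSetAlg 𝔅₂) {n : ℕ}
    (s : Fin n → Set (S₁ × S₂)) (hs : ∀ i, s i ∈ RectAlg 𝔅₁ 𝔅₂) :
    (⋂ i, s i) ∈ RectAlg 𝔅₁ 𝔅₂ := by
  induction n with
  | zero =>
    rw [Set.iInter_of_empty]
    have := rectAlg_rect (𝔅₁ := 𝔅₁) (𝔅₂ := 𝔅₂) halg₁.univ_mem halg₂.univ_mem
    rwa [Set.univ_prod_univ] at this
  | succ n ih =>
    have : (⋂ i, s i) = s 0 ∩ ⋂ i : Fin n, s i.succ := by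
      ext x
      simp only [Set.mem_iInter, Set.mem_inter_iff]
      constructor
      · intro h; exact ⟨h 0, fun i => h i.succ⟩
      · rintro ⟨h0, h⟩ i
        rcases Fin.eq_zero_or_eq_succ i with rfl | ⟨j, rfl⟩
        · exact h0
        · exact h j
    rw [this]
    exact rectAlg_inter halg₁ halg₂ (hs 0) (ih _ fun i => hs i.succ)

lemma rectAlg_compl (halg₁ : IsSetAlg 𝔅₁) (halg₂ : IsSetAlg 𝔅₂)
    {X : Set (S₁ × S₂)} (hX : X ∈ RectAlg 𝔅₁ 𝔅₂) : Xᶜ ∈ RectAlg 𝔅₁ 𝔅₂ := by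
  obtain ⟨n, R1, R2, hR, hXeq⟩ := hX
  subst hXeq
  rw [Set.compl_iUnion]
  refine rectAlg_iInter_fin halg₁ halg₂ _ fun i => ?_
  rw [Set.compl_prod_eq_union]
  exact rectAlg_union (rectAlg_rect (halg₁.2.1 _ (hR i).1) halg₂.univ_mem)
    (rectAlg_rect halg₁.univ_mem (halg₂.2.1 _ (hR i).2))

lemma rectAlg_diff (halg₁ : IsSetAlg 𝔅₁) (halg₂ : IsSetAlg 𝔅₂)
    {X Y : Set (S₁ × S₂)} (hX : X ∈ RectAlg 𝔅₁ 𝔅₂) (hY : Y ∈ RectAlg 𝔅₁ 𝔅₂) :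
    X \ Y ∈ RectAlg 𝔅₁ 𝔅₂ :=
  rectAlg_inter halg₁ halg₂ hX (rectAlg_compl halg₁ halg₂ hY)

lemma rectAlg_mono (halg₁ : IsSetAlg 𝔅₁) (halg₂ : IsSetAlg 𝔅₂)
    {μ : Set (S₁ × S₂) → ℝ}
    (hnonneg : ∀ B ∈ RectAlg 𝔅₁ 𝔅₂, 0 ≤ μ B)
    (hadd : ∀ A ∈ RectAlg 𝔅₁ 𝔅₂, ∀ B ∈ RectAlg 𝔅₁ 𝔅₂, Disjoint A B →
      μ (A ∪ B) = μ A + μ B)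
    {X Y : Set (S₁ × S₂)} (hX : X ∈ RectAlg 𝔅₁ 𝔅₂) (hY : Y ∈ RectAlg 𝔅₁ 𝔅₂)
    (hXY : X ⊆ Y) : μ X ≤ μ Y := by
  have hd : Y \ X ∈ RectAlg 𝔅₁ 𝔅₂ := rectAlg_diff halg₁ halg₂ hY hX
  have h : μ Y = μ X + μ (Y \ X) := by
    rw [← hadd X hX (Y \ X) hd Set.disjoint_sdiff_right, Set.union_diff_cancel hXY]
  linarith [hnonneg _ hd]

end RectAlgLemmas

section Tree

variable {S₁ S₂ : Type*}

/-- Compact witness set at level `j` for a point `y`. -/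
def Gset (m : ℕ → ℕ) (R2 : ∀ j : ℕ, Fin (m j) → Set S₂)
    (K : ∀ j : ℕ, Fin (m j) → Set S₁) (j : ℕ) (y : S₂) : Set S₁ :=
  ⋃ (k : Fin (m j)) (_ : y ∈ R2 j k), K j k

/-- Compact witness intersection up to level `n`. -/
def Fset (m : ℕ → ℕ) (R2 : ∀ j : ℕ, Fin (m j) → Set S₂)
    (K : ∀ j : ℕ, Fin (m j) → Set S₁) (n : ℕ) (y : S₂) : Set S₁ :=
  ⋂ j : Fin (n + 1), Gset m R2 K j y

/-- The set of `y` that still admit a compact witness at level `n`. -/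
def Zset (m : ℕ → ℕ) (R2 : ∀ j : ℕ, Fin (m j) → Set S₂)
    (K : ∀ j : ℕ, Fin (m j) → Set S₁) (n : ℕ) : Set S₂ :=
  { y | (Fset m R2 K n y).Nonempty }

variable {m : ℕ → ℕ} {R2 : ∀ j : ℕ, Fin (m j) → Set S₂}
  {K : ∀ j : ℕ, Fin (m j) → Set S₁}

lemma Fset_anti {y : S₂} : Antitone (fun n => Fset m R2 K n y) := by
  apply antitone_nat_of_succ_le
  intro n x hx
  simp only [Fset, Set.mem_iInter] at hx ⊢
  intro j
  exact hx ⟨j.1, by omega⟩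

lemma Gset_isCompact [TopologicalSpace S₁] (hK : ∀ j k, IsCompact (K j k))
    (j : ℕ) (y : S₂) : IsCompact (Gset m R2 K j y) := by
  apply isCompact_iUnion
  intro k
  by_cases h : y ∈ R2 j k
  · simpa [h] using hK j k
  · simp [h]

lemma Fset_isClosed [TopologicalSpace S₁] [T2Space S₁] (hK : ∀ j k, IsCompact (K j k))
    (n : ℕ) (y : S₂) : IsClosed (Fset m R2 K n y) :=
  isClosed_iInter fun j => (Gset_isCompact hK j y).isClosed

lemma Fset_isCompact [TopologicalSpace S₁] [T2Space S₁] (hK : ∀ j k, IsCompact (K j k))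
    (n : ℕ) (y : S₂) : IsCompact (Fset m R2 K n y) := by
  apply IsCompact.of_isClosed_subset (Gset_isCompact hK 0 y) (Fset_isClosed hK n y)
  have := Set.iInter_subset (fun j : Fin (n + 1) => Gset m R2 K j y) 0
  simpa [Fset] using this

lemma Zset_anti : Antitone (Zset m R2 K) := by
  intro a b hab y hy
  exact hy.mono (Fset_anti hab)

lemma Zset_mem_alg {𝔅₂ : Set (Set S₂)} (halg₂ : IsSetAlg 𝔅₂)
    (hR2 : ∀ j k, R2 j k ∈ 𝔅₂) (n : ℕ) : Zset m R2 K n ∈ 𝔅₂ := by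
  classical
  have hZ : Zset m R2 K n =
      ⋃ (σ : ∀ j : Fin (n + 1), Fin (m j) → Bool),
      ⋃ (_ : (⋂ j : Fin (n + 1), ⋃ (k : Fin (m j)) (_ : σ j k = true),
          K j k).Nonempty),
      ⋂ (j : Fin (n + 1)) (k : Fin (m j)),
        (if σ j k = true then R2 j k else (R2 j k)ᶜ) := by
    ext y
    simp only [Zset, Set.mem_setOf_eq, Set.mem_iUnion]
    constructor
    · rintro ⟨x, hx⟩
      refine ⟨fun j k => decide (y ∈ R2 j k), ⟨x, ?_⟩, ?_⟩
      · simp only [Fset, Set.mem_iInter] at hx ⊢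
        intro j
        have := hx j
        simp only [Gset, Set.mem_iUnion] at this ⊢
        obtain ⟨k, hy, hk⟩ := this
        exact ⟨k, by simpa using hy, hk⟩
      · simp only [Set.mem_iInter]
        intro j k
        by_cases h : y ∈ R2 j k <;> simp [h]
    · rintro ⟨σ, ⟨x, hx⟩, hcell⟩
      refine ⟨x, ?_⟩
      simp only [Set.mem_iInter] at hx hcell
      simp only [Fset, Set.mem_iInter]
      intro j
      have := hx j
      simp only [Set.mem_iUnion] at this
      obtain ⟨k, hσ, hk⟩ := this
      have hc := hcell j k
      rw [if_pos hσ] at hc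
      simp only [Gset, Set.mem_iUnion]
      exact ⟨k, hc, hk⟩
  rw [hZ]
  apply halg₂.iUnion_fintype
  intro σ
  by_cases hσ : (⋂ j : Fin (n + 1), ⋃ (k : Fin (m j)) (_ : σ j k = true), K j k).Nonempty
  · simp only [hσ, Set.iUnion_true]
    apply halg₂.iInter_fintype
    intro j
    apply halg₂.iInter_fintype
    intro k
    by_cases h : σ j k = true
    · rw [if_pos h]; exact hR2 _ _
    · rw [if_neg h]; exact halg₂.2.1 _ (hR2 _ _)
  · simpa [hσ] using halg₂.1

end Tree

theorem geom_half_sum_le (q : ℕ) : ∑ k ∈ Finset.range q, (2⁻¹ : ℝ) ^ (k + 1) ≤ 1 := by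
  have h : ∀ q : ℕ, ∑ k ∈ Finset.range q, (2⁻¹ : ℝ) ^ (k + 1) = 1 - 2⁻¹ ^ q := by
    intro q
    induction q with
    | zero => simp
    | succ q ih => rw [Finset.sum_range_succ, ih]; ring
  rw [h]
  have : (0:ℝ) ≤ 2⁻¹ ^ q := by positivity
  linarith

/-- Continuity at `∅` of a finitely additive measure on the rectangle algebra whose
first marginal is a Radon probability measure: along any decreasing sequence with
empty intersection the measure tends to `0`. -/
theorem rectAlg_finitelyAdditive_tendsto_zero
    {S₁ S₂ : Type*} [TopologicalSpace S₁] [T2Space S₁]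
    [MeasurableSpace S₁] [BorelSpace S₁] [MeasurableSpace S₂]
    (μ₁ : Measure S₁) [IsProbabilityMeasure μ₁]
    (hreg : μ₁.InnerRegularWRT IsCompact MeasurableSet)
    (μ₂ : Measure S₂) [IsProbabilityMeasure μ₂]
    (𝔅₁ : Set (Set S₁)) (𝔅₂ : Set (Set S₂))
    (halg₁ : IsSetAlg 𝔅₁) (halg₂ : IsSetAlg 𝔅₂)
    (hmeas₁ : ∀ B ∈ 𝔅₁, MeasurableSet B) (hmeas₂ : ∀ B ∈ 𝔅₂, MeasurableSet B)
    (μ : Set (S₁ × S₂) → ℝ)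
    (hnonneg : ∀ B ∈ RectAlg 𝔅₁ 𝔅₂, 0 ≤ μ B)
    (hempty : μ ∅ = 0)
    (hadd : ∀ A ∈ RectAlg 𝔅₁ 𝔅₂, ∀ B ∈ RectAlg 𝔅₁ 𝔅₂, Disjoint A B →
      μ (A ∪ B) = μ A + μ B)
    (hmarg₁ : ∀ B₁ ∈ 𝔅₁, μ (B₁ ×ˢ (Set.univ : Set S₂)) = (μ₁ B₁).toReal)
    (hmarg₂ : ∀ B₂ ∈ 𝔅₂, μ ((Set.univ : Set S₁) ×ˢ B₂) = (μ₂ B₂).toReal) :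
    ∀ B : ℕ → Set (S₁ × S₂), (∀ i, B i ∈ RectAlg 𝔅₁ 𝔅₂) → Antitone B →
      (⋂ i, B i) = ∅ →
      Filter.Tendsto (fun i => μ (B i)) Filter.atTop (nhds 0) := by
  intro B hB hBanti hBempty
  classical
  have hBrep := hB
  simp only [RectAlg, Set.mem_setOf_eq] at hBrep
  choose m R1 R2 hRmem hBeq using hBrep
  rw [Metric.tendsto_atTop]
  intro ε hε
  -- choose compact approximations of the first sides, with total error ≤ ε/2
  have hKex : ∀ (j : ℕ) (k : Fin (m j)), ∃ Kjk : Set S₁, Kjk ⊆ R1 j k ∧ IsCompact Kjk ∧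
      μ₁ (R1 j k \ Kjk) ≤ ENNReal.ofReal (ε / 2 * (2⁻¹ : ℝ) ^ (j + 1) * (2⁻¹ : ℝ) ^ ((k : ℕ) + 1)) := by
    intro j k
    set δ := ENNReal.ofReal (ε / 2 * (2⁻¹ : ℝ) ^ (j + 1) * (2⁻¹ : ℝ) ^ ((k : ℕ) + 1)) with hδ
    have hδpos : 0 < δ := by
      rw [hδ]
      apply ENNReal.ofReal_pos.2
      positivity
    by_cases hsmall : μ₁ (R1 j k) ≤ δ
    · exact ⟨∅, Set.empty_subset _, isCompact_empty, by simpa using hsmall⟩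
    · push_neg at hsmall
      have hmeasR : MeasurableSet (R1 j k) := hmeas₁ _ (hRmem j k).1
      have hfin : μ₁ (R1 j k) ≠ ⊤ := measure_ne_top _ _
      have hlt : μ₁ (R1 j k) - δ < μ₁ (R1 j k) :=
        ENNReal.sub_lt_self hfin (hδpos.trans hsmall).ne' hδpos.ne'
      obtain ⟨Kjk, hsub, hcomp, hK⟩ := hreg hmeasR _ hlt
      refine ⟨Kjk, hsub, hcomp, ?_⟩
      have hKmeas : NullMeasurableSet Kjk μ₁ := hcomp.isClosed.measurableSet.nullMeasurableSet
      rw [measure_diff hsub hKmeas (measure_ne_top _ _)]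
      have : μ₁ (R1 j k) ≤ δ + μ₁ Kjk := by
        calc μ₁ (R1 j k) ≤ (μ₁ (R1 j k) - δ) + δ := le_tsub_add
        _ ≤ μ₁ Kjk + δ := add_le_add hK.le le_rfl
        _ = δ + μ₁ Kjk := add_comm _ _
      exact tsub_le_iff_right.2 this
  choose K hKsub hKcomp hKsmall using hKex
  -- the "bad" set at stage n
  set BadE : ℕ → Set S₁ := fun n => ⋃ j ∈ Finset.range (n + 1), ⋃ k : Fin (m j), (R1 j k \ K j k)
    with hBadE
  have hBadE_small : ∀ n, μ₁ (BadE n) ≤ ENNReal.ofReal (ε / 2) := by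
    intro n
    calc μ₁ (BadE n) ≤ ∑ j ∈ Finset.range (n + 1), μ₁ (⋃ k : Fin (m j), (R1 j k \ K j k)) :=
          measure_biUnion_finset_le _ _
    _ ≤ ∑ j ∈ Finset.range (n + 1), ∑ k : Fin (m j), μ₁ (R1 j k \ K j k) := by
          gcongr with j hj; exact measure_iUnion_fintype_le _ _
    _ ≤ ∑ j ∈ Finset.range (n + 1), ∑ k : Fin (m j),
          ENNReal.ofReal (ε / 2 * (2⁻¹ : ℝ) ^ (j + 1) * (2⁻¹ : ℝ) ^ ((k : ℕ) + 1)) := by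
          gcongr with j hj k hk; exact hKsmall j k
    _ = ∑ j ∈ Finset.range (n + 1), ENNReal.ofReal (∑ k : Fin (m j),
          (ε / 2 * (2⁻¹ : ℝ) ^ (j + 1) * (2⁻¹ : ℝ) ^ ((k : ℕ) + 1))) := by
          refine Finset.sum_congr rfl fun j _ => ?_
          rw [ENNReal.ofReal_sum_of_nonneg (fun k _ => by positivity)]
    _ = ENNReal.ofReal (∑ j ∈ Finset.range (n + 1), ∑ k : Fin (m j),
          (ε / 2 * (2⁻¹ : ℝ) ^ (j + 1) * (2⁻¹ : ℝ) ^ ((k : ℕ) + 1))) := by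
          rw [ENNReal.ofReal_sum_of_nonneg
            (fun j _ => Finset.sum_nonneg fun k _ => by positivity)]
    _ ≤ ENNReal.ofReal (ε / 2) := by
          apply ENNReal.ofReal_le_ofReal
          calc ∑ j ∈ Finset.range (n + 1), ∑ k : Fin (m j),
                (ε / 2 * (2⁻¹ : ℝ) ^ (j + 1) * (2⁻¹ : ℝ) ^ ((k : ℕ) + 1))
              ≤ ∑ j ∈ Finset.range (n + 1), ε / 2 * (2⁻¹ : ℝ) ^ (j + 1) := by
                apply Finset.sum_le_sum
                intro j hj
                rw [← Finset.mul_sum, Fin.sum_univ_eq_sum_range (fun k => (2⁻¹ : ℝ) ^ (k + 1))]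
                calc ε / 2 * (2⁻¹ : ℝ) ^ (j + 1) * ∑ k ∈ Finset.range (m j), (2⁻¹ : ℝ) ^ (k + 1)
                    ≤ ε / 2 * (2⁻¹ : ℝ) ^ (j + 1) * 1 :=
                      mul_le_mul_of_nonneg_left (geom_half_sum_le _) (by positivity)
                _ = ε / 2 * (2⁻¹ : ℝ) ^ (j + 1) := by ring
          _ = ε / 2 * ∑ j ∈ Finset.range (n + 1), (2⁻¹ : ℝ) ^ (j + 1) := by rw [Finset.mul_sum]
          _ ≤ ε / 2 * 1 := mul_le_mul_of_nonneg_left (geom_half_sum_le _) (by positivity)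
          _ = ε / 2 := by ring
  -- the Z sets
  have hZalg : ∀ n, Zset m R2 K n ∈ 𝔅₂ := fun n =>
    Zset_mem_alg halg₂ (fun j k => (hRmem j k).2) n
  -- covering property
  have hcover : ∀ n, B n ⊆ (BadE n) ×ˢ Set.univ ∪ Set.univ ×ˢ (Zset m R2 K n) := by
    intro n z hz
    by_cases hx : z.1 ∈ BadE n
    · exact Or.inl ⟨hx, Set.mem_univ _⟩
    · refine Or.inr ⟨Set.mem_univ _, ⟨z.1, ?_⟩⟩
      simp only [Fset, Set.mem_iInter]
      intro j
      have hzj : z ∈ B (j : ℕ) := hBanti (by omega : (j : ℕ) ≤ n) hz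
      rw [hBeq] at hzj
      obtain ⟨k, hk⟩ := Set.mem_iUnion.1 hzj
      have hxk : z.1 ∈ K j k := by
        by_contra hxK
        apply hx
        simp only [hBadE]
        exact Set.mem_iUnion.2 ⟨(j : ℕ), Set.mem_iUnion.2
          ⟨Finset.mem_range.2 (by omega), Set.mem_iUnion.2 ⟨k, hk.1, hxK⟩⟩⟩
      exact Set.mem_iUnion.2 ⟨k, Set.mem_iUnion.2 ⟨hk.2, hxk⟩⟩
  -- empty intersection of the Z sets
  have hZempty : (⋂ n, Zset m R2 K n) = ∅ := by
    rw [Set.eq_empty_iff_forall_notMem]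
    intro y hy
    have hne : ∀ n, (Fset m R2 K n y).Nonempty := fun n => Set.mem_iInter.1 hy n
    obtain ⟨x, hx⟩ := IsCompact.nonempty_iInter_of_sequence_nonempty_isCompact_isClosed
      (fun n => Fset m R2 K n y) (fun n => Fset_anti (Nat.le_succ n))
      hne (Fset_isCompact hKcomp 0 y) (fun n => Fset_isClosed hKcomp n y)
    have hxy : ∀ n, (x, y) ∈ B n := by
      intro n
      have hxn : x ∈ Fset m R2 K n y := Set.mem_iInter.1 hx n
      have hxG : x ∈ Gset m R2 K n y := by
        have := Set.mem_iInter.1 hxn (Fin.last n)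
        simpa [Fin.val_last] using this
      simp only [Gset, Set.mem_iUnion] at hxG
      obtain ⟨k, hyk, hxk⟩ := hxG
      rw [hBeq]
      exact Set.mem_iUnion.2 ⟨k, hKsub n k hxk, hyk⟩
    have hmem : (x, y) ∈ ⋂ i, B i := Set.mem_iInter.2 hxy
    rw [hBempty] at hmem
    exact hmem
  -- μ₂ of the Z sets tends to zero
  have hZtend : Filter.Tendsto (fun n => μ₂ (Zset m R2 K n)) Filter.atTop (nhds 0) := by
    have h := MeasureTheory.tendsto_measure_iInter_atTop
      (μ := μ₂) (fun n => (hmeas₂ _ (hZalg n)).nullMeasurableSet)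
      Zset_anti ⟨0, measure_ne_top _ _⟩
    rw [hZempty, measure_empty] at h
    exact h
  have hZtoReal : Filter.Tendsto (fun n => (μ₂ (Zset m R2 K n)).toReal)
      Filter.atTop (nhds 0) := by
    have h := (ENNReal.tendsto_toReal (a := 0) (by simp)).comp hZtend
    simpa [Function.comp_def] using h
  rw [Metric.tendsto_atTop] at hZtoReal
  obtain ⟨N, hN⟩ := hZtoReal (ε / 2) (by positivity)
  refine ⟨N, fun n hn => ?_⟩
  rw [Real.dist_0_eq_abs, abs_of_nonneg (hnonneg _ (hB n))]
  -- split B n along U = univ ×ˢ Z n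
  have hUalg : Set.univ ×ˢ (Zset m R2 K n) ∈ RectAlg 𝔅₁ 𝔅₂ :=
    rectAlg_rect halg₁.univ_mem (hZalg n)
  set U : Set (S₁ × S₂) := Set.univ ×ˢ (Zset m R2 K n) with hU
  have hXalg : B n ∩ U ∈ RectAlg 𝔅₁ 𝔅₂ := rectAlg_inter halg₁ halg₂ (hB n) hUalg
  have hYalg : B n \ U ∈ RectAlg 𝔅₁ 𝔅₂ := rectAlg_diff halg₁ halg₂ (hB n) hUalg
  have hsplit : μ (B n) = μ (B n ∩ U) + μ (B n \ U) := by
    rw [← hadd _ hXalg _ hYalg (Set.disjoint_sdiff_right.mono_left Set.inter_subset_right),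
      Set.inter_union_diff]
  have hbound1 : μ (B n ∩ U) ≤ (μ₂ (Zset m R2 K n)).toReal := by
    have h := rectAlg_mono halg₁ halg₂ hnonneg hadd hXalg hUalg Set.inter_subset_right
    rwa [hU, hmarg₂ _ (hZalg n)] at h
  have hYsub : B n \ U ⊆ (BadE n) ×ˢ Set.univ := by
    intro z hz
    rcases hcover n hz.1 with h | h
    · exact h
    · exact absurd (show z ∈ U from h) hz.2
  have hbound2 : μ (B n \ U) ≤ ε / 2 := by
    obtain ⟨p, T1, T2, hT, hYeq⟩ := hYalg
    set P : Set S₁ := ⋃ i : Fin p, if (T2 i).Nonempty then T1 i else ∅ with hPdef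
    have hPalg : P ∈ 𝔅₁ := by
      refine halg₁.iUnion_fin _ (fun i => ?_)
      by_cases h : (T2 i).Nonempty
      · simpa [h] using (hT i).1
      · simpa [h] using halg₁.1
    have hYP : B n \ U ⊆ P ×ˢ Set.univ := by
      intro z hz
      rw [hYeq] at hz
      obtain ⟨i, hi⟩ := Set.mem_iUnion.1 hz
      refine ⟨Set.mem_iUnion.2 ⟨i, ?_⟩, Set.mem_univ _⟩
      rw [if_pos ⟨z.2, hi.2⟩]
      exact hi.1
    have hPBad : P ⊆ BadE n := by
      intro x hxP
      obtain ⟨i, hi⟩ := Set.mem_iUnion.1 hxP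
      by_cases h : (T2 i).Nonempty
      · rw [if_pos h] at hi
        obtain ⟨y, hy⟩ := h
        have hzY : (x, y) ∈ B n \ U := by
          rw [hYeq]; exact Set.mem_iUnion.2 ⟨i, hi, hy⟩
        exact (hYsub hzY).1
      · rw [if_neg h] at hi
        exact absurd hi (Set.notMem_empty x)
    calc μ (B n \ U) ≤ μ (P ×ˢ Set.univ) := by
          refine rectAlg_mono halg₁ halg₂ hnonneg hadd ?_
            (rectAlg_rect hPalg halg₂.univ_mem) hYP
          exact ⟨p, T1, T2, hT, hYeq⟩
    _ = (μ₁ P).toReal := hmarg₁ _ hPalg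
    _ ≤ (ENNReal.ofReal (ε / 2)).toReal := by
          apply ENNReal.toReal_mono ENNReal.ofReal_ne_top
          exact le_trans (measure_mono hPBad) (hBadE_small n)
    _ = ε / 2 := ENNReal.toReal_ofReal (by positivity)
  have h2 : (μ₂ (Zset m R2 K n)).toReal < ε / 2 := by
    have h := hN n hn
    rwa [Real.dist_0_eq_abs, abs_of_nonneg ENNReal.toReal_nonneg] at h
  calc μ (B n) = μ (B n ∩ U) + μ (B n \ U) := hsplit
  _ ≤ (μ₂ (Zset m R2 K n)).toReal + ε / 2 := add_le_add hbound1 hbound2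
  _ < ε / 2 + ε / 2 := by linarith
  _ = ε := by ring
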